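/- Let n ≥ 2 and ε > 0. Suppose real numbers r₁,...,r_{n+1} satisfy r_{n+1} = 0, and for each i ∈ {1,...,n}: rᵢ - r_{i+1} ≤ 1/(4n) + ((n-i)/(4n) - r_{i+1})·(1/n) if no mistake is made at i, and rᵢ - r_{i+1} ≤ 1/(4n) - 4ε/n + ((n-i)/(4n) - r_{i+1})·(1/n - 16ε/n) if a mistake is made at i. Further suppose (n-i)/(4n) - r_{i+1} ≤ (4ε/n)·min{n-i, M} for all i, where M ∈ {1,...,n} is the total number of mistakes, and (n-i)/(4n) - r_{i+1} ≥ 0. Then r₁ ≤ 1/4 - 2ε·(M/n)·((M+1)/n). -/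

import Mathlib

private lemma sum_distinct_nat (T : Finset ℕ) (hT : ∀ t ∈ T, 1 ≤ t) :
    T.card * (T.card + 1) ≤ 2 * ∑ t ∈ T, t := by
  induction T using Finset.strongInduction with
  | _ T IH =>
    rcases T.eq_empty_or_nonempty with rfl | hne
    · simp
    · have hmem : T.max' hne ∈ T := T.max'_mem hne
      have hsub : T ⊆ Finset.Icc 1 (T.max' hne) := by
        intro t ht
        exact Finset.mem_Icc.mpr ⟨hT t ht, T.le_max' t ht⟩
      have hcard : T.card ≤ T.max' hne := by
        have := Finset.card_le_card hsub
        simpa using this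
      have herase := IH (T.erase (T.max' hne)) (Finset.erase_ssubset hmem)
        (fun t ht => hT t (Finset.mem_of_mem_erase ht))
      have hce : (T.erase (T.max' hne)).card = T.card - 1 := Finset.card_erase_of_mem hmem
      have hsum : ∑ t ∈ T, t = T.max' hne + ∑ t ∈ T.erase (T.max' hne), t :=
        (Finset.add_sum_erase T id hmem).symm
      have hpos : 1 ≤ T.card := Finset.card_pos.mpr hne
      obtain ⟨k, hk⟩ : ∃ k, T.card = k + 1 := ⟨T.card - 1, by omega⟩
      rw [hce, hk] at herase
      simp only [Nat.add_sub_cancel] at herase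
      rw [hsum, hk]
      nlinarith [herase, hcard, hk]

theorem stmt_8 (n : ℕ) (hn : 2 ≤ n) (ε : ℝ) (hε : 0 < ε)
    (r : ℕ → ℝ) (S : Finset ℕ) (hS : S ⊆ Finset.Icc 1 n)
    (M : ℕ) (hM : S.card = M) (hM1 : 1 ≤ M)
    (hend : r (n + 1) = 0)
    (hno : ∀ i ∈ Finset.Icc 1 n, i ∉ S →
      r i - r (i + 1) ≤ 1 / (4 * (n : ℝ)) + (((n : ℝ) - i) / (4 * n) - r (i + 1)) * (1 / n))
    (hmis : ∀ i ∈ Finset.Icc 1 n, i ∈ S →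
      r i - r (i + 1) ≤ 1 / (4 * (n : ℝ)) - 4 * ε / n
        + (((n : ℝ) - i) / (4 * n) - r (i + 1)) * (1 / n - 16 * ε / n))
    (hgap : ∀ i ∈ Finset.Icc 1 n,
      ((n : ℝ) - i) / (4 * n) - r (i + 1) ≤ (4 * ε / n) * min ((n : ℝ) - i) (M : ℝ))
    (hge : ∀ i ∈ Finset.Icc 1 n, 0 ≤ ((n : ℝ) - i) / (4 * n) - r (i + 1)) :
    r 1 ≤ 1 / 4 - 2 * ε * ((M : ℝ) / n) * (((M : ℝ) + 1) / n) := by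
  have hn0 : (0:ℝ) < n := by
    have : (2:ℝ) ≤ n := by exact_mod_cast hn
    linarith
  have hnne : (n:ℝ) ≠ 0 := ne_of_gt hn0
  set D : ℕ → ℝ := fun i => ((n:ℝ) + 1 - i) / (4*n) - r i with hDdef
  have hc : (0:ℝ) ≤ 4*ε/n := by positivity
  have hn1 : (1:ℝ) ≤ n := by
    have : (1:ℕ) ≤ n := by omega
    exact_mod_cast this
  have hfac : (0:ℝ) ≤ 1 - 1/(n:ℝ) := by
    rw [sub_nonneg, div_le_one hn0]; exact hn1
  have hDe : ∀ i : ℕ, ((n:ℝ) - i) / (4*n) - r (i+1) = D (i+1) := by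
    intro i; simp only [hDdef]; push_cast; ring_nf
  have hstep : ∀ i ∈ Finset.Icc 1 n,
      (1 - 1/(n:ℝ)) * D (i+1) + (if i ∈ S then 4*ε/n else 0) ≤ D i := by
    intro i hi
    have hge' := hge i hi
    rw [hDe i] at hge'
    have hri : D i = D (i+1) + (1/(4*(n:ℝ)) - (r i - r (i+1))) := by
      simp only [hDdef]; push_cast; field_simp; ring
    by_cases hiS : i ∈ S
    · have h := hmis i hi hiS
      rw [hDe i] at h
      rw [if_pos hiS, hri]
      have hq : 0 ≤ 16 * ε / n * D (i+1) :=
        mul_nonneg (by positivity) hge'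
      nlinarith [h, hq]
    · have h := hno i hi hiS
      rw [hDe i] at h
      rw [if_neg hiS, hri]
      nlinarith [h]
  set g : ℕ → ℕ → ℝ := fun i j => if i ≤ j then 1 - ((j:ℝ) - i)/n else 0 with hgdef
  have hgstep : ∀ i : ℕ, 1 ≤ i → ∀ j ∈ S,
      g i j ≤ (1 - 1/(n:ℝ)) * g (i+1) j + (if j = i then 1 else 0) := by
    intro i hi1 j hj
    have hjn : j ≤ n := (Finset.mem_Icc.mp (hS hj)).2
    have hj1 : 1 ≤ j := (Finset.mem_Icc.mp (hS hj)).1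
    simp only [hgdef]
    rcases lt_trichotomy j i with h | h | h
    · rw [if_neg (by omega), if_neg (by omega), if_neg (by omega)]
      simp
    · subst h
      rw [if_pos le_rfl, if_neg (by omega), if_pos rfl]
      simp
    · rw [if_pos (by omega), if_pos (by omega), if_neg (by omega), add_zero]
      have hji : (i:ℝ) + 1 ≤ j := by exact_mod_cast h
      have key : (1 - 1/(n:ℝ)) * (1 - ((j:ℝ) - (↑(i+1)))/n) - (1 - ((j:ℝ) - i)/n)
          = ((j:ℝ) - i - 1)/n^2 := by
        push_cast
        field_simp
        ring
      have hpos : 0 ≤ ((j:ℝ) - i - 1)/n^2 := by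
        apply div_nonneg (by linarith) (by positivity)
      linarith [key, hpos]
  have haux : ∀ d, d ≤ n → 4*ε/n * ∑ j ∈ S, g (n+1-d) j ≤ D (n+1-d) := by
    intro d
    induction d with
    | zero =>
      intro _
      have h1 : ∀ j ∈ S, g (n+1-0) j = 0 := by
        intro j hj
        have hjn : j ≤ n := (Finset.mem_Icc.mp (hS hj)).2
        simp only [hgdef]
        rw [if_neg (by omega)]
      rw [Finset.sum_congr rfl h1]
      simp only [Nat.sub_zero, Finset.sum_const_zero, mul_zero]
      simp only [hDdef, hend]
      push_cast
      field_simp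
      simp
    | succ d IH =>
      intro hdn
      have IH' := IH (by omega)
      have hi1 : n + 1 - (d+1) = n - d := by omega
      have hi2 : (n - d) + 1 = n + 1 - d := by omega
      have hiIcc : n - d ∈ Finset.Icc 1 n := Finset.mem_Icc.mpr ⟨by omega, by omega⟩
      rw [hi1]
      have IH'' : 4*ε/n * ∑ j ∈ S, g ((n-d)+1) j ≤ D ((n-d)+1) := by
        rw [hi2]; exact IH'
      have hsum : ∑ j ∈ S, g (n-d) j
          ≤ (1 - 1/(n:ℝ)) * ∑ j ∈ S, g ((n-d)+1) j + (if n-d ∈ S then 1 else 0) := by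
        rw [Finset.mul_sum]
        have hind : (if n-d ∈ S then (1:ℝ) else 0) = ∑ j ∈ S, (if j = n-d then (1:ℝ) else 0) := by
          rw [Finset.sum_ite_eq' S (n-d) (fun _ => (1:ℝ))]
        rw [hind, ← Finset.sum_add_distrib]
        exact Finset.sum_le_sum (fun j hj => hgstep (n-d) (by omega) j hj)
      calc 4*ε/n * ∑ j ∈ S, g (n-d) j
          ≤ 4*ε/n * ((1 - 1/(n:ℝ)) * ∑ j ∈ S, g ((n-d)+1) j + (if n-d ∈ S then 1 else 0)) :=
            mul_le_mul_of_nonneg_left hsum hc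
        _ = (1 - 1/(n:ℝ)) * (4*ε/n * ∑ j ∈ S, g ((n-d)+1) j)
              + (if n-d ∈ S then 4*ε/n else 0) := by
            split_ifs <;> ring
        _ ≤ (1 - 1/(n:ℝ)) * D ((n-d)+1) + (if n-d ∈ S then 4*ε/n else 0) := by
            have := mul_le_mul_of_nonneg_left IH'' hfac
            gcongr
        _ ≤ D (n-d) := hstep (n-d) hiIcc
  have hfin := haux n le_rfl
  have h1 : n + 1 - n = 1 := by omega
  rw [h1] at hfin
  -- rewrite the weight at i = 1
  have hgs : ∀ j ∈ S, g 1 j = ((n:ℝ) + 1 - j)/n := by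
    intro j hj
    have hj1 : 1 ≤ j := (Finset.mem_Icc.mp (hS hj)).1
    simp only [hgdef]
    rw [if_pos hj1]
    push_cast
    field_simp
    ring
  rw [Finset.sum_congr rfl hgs] at hfin
  -- nat sum bound
  set X : ℕ := ∑ j ∈ S, (n + 1 - j) with hX
  have hinj : Set.InjOn (fun j => n + 1 - j) S := by
    intro a ha b hb hab
    have ha' : a ≤ n := (Finset.mem_Icc.mp (hS ha)).2
    have hb' : b ≤ n := (Finset.mem_Icc.mp (hS hb)).2
    simp only at hab
    omega
  have hTcard : (S.image (fun j => n + 1 - j)).card = M := by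
    rw [Finset.card_image_of_injOn hinj, hM]
  have hT1 : ∀ t ∈ S.image (fun j => n + 1 - j), 1 ≤ t := by
    intro t ht
    obtain ⟨j, hj, rfl⟩ := Finset.mem_image.mp ht
    have : j ≤ n := (Finset.mem_Icc.mp (hS hj)).2
    omega
  have hTsum : ∑ t ∈ S.image (fun j => n + 1 - j), t = X := by
    rw [Finset.sum_image (fun a ha b hb => hinj ha hb)]
  have hnat : M * (M + 1) ≤ 2 * X := by
    have := sum_distinct_nat (S.image (fun j => n + 1 - j)) hT1
    rw [hTcard, hTsum] at this
    exact this
  -- cast the real sum to X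
  have hcast : ∑ j ∈ S, ((n:ℝ) + 1 - j)/n = (X:ℝ)/n := by
    rw [hX]
    push_cast
    rw [← Finset.sum_div]
    congr 1
    apply Finset.sum_congr rfl
    intro j hj
    have hj' : j ≤ n + 1 := by
      have : j ≤ n := (Finset.mem_Icc.mp (hS hj)).2
      omega
    rw [Nat.cast_sub hj']
    push_cast
    ring
  rw [hcast] at hfin
  have hD1 : D 1 = 1/4 - r 1 := by
    simp only [hDdef]
    push_cast
    field_simp
    ring
  rw [hD1] at hfin
  -- final arithmetic
  have hX' : (M:ℝ) * ((M:ℝ) + 1) ≤ 2 * (X:ℝ) := by exact_mod_cast hnat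
  have key : 4*ε/n * ((X:ℝ)/n) - 2 * ε * ((M : ℝ) / n) * (((M : ℝ) + 1) / n)
      = 2*ε*(2*(X:ℝ) - (M:ℝ)*((M:ℝ)+1))/n^2 := by
    field_simp
    ring
  have hpos2 : 0 ≤ 2*ε*(2*(X:ℝ) - (M:ℝ)*((M:ℝ)+1))/n^2 := by
    apply div_nonneg (by nlinarith) (by positivity)
  linarith [key, hpos2, hfin]
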